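/- Let Z₁, Z₂, … be independent standard normal random variables. Then the rescaled median absolute deviation MAD₁≤i≤n Zᵢ / Φ⁻¹(3/4), where Φ⁻¹ is the quantile function of the standard normal distribution, converges in probability to 1 as n → ∞; that is, the rescaled MAD is a weakly consistent estimator of the scale σ = 1 under the standard normal distribution. -/

import Mathlib

open MeasureTheory ProbabilityTheory Filter

open scoped ENNReal NNReal

section DetLemmas

open List Finset

/-- The sample median of a finite sample `x : Fin n → ℝ`, defined from the order
statistics: the middle order statistic when `n` is odd, and the average of the
two middle order statistics when `n` is even. -/
noncomputable def sampleMedian {n : ℕ} (x : Fin n → ℝ) : ℝ :=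
  let l := (List.ofFn x).mergeSort (· ≤ ·)
  if n % 2 = 1 then l.getD (n / 2) 0
  else (l.getD (n / 2 - 1) 0 + l.getD (n / 2) 0) / 2

/-- The median absolute deviation: `MAD(x) = medianᵢ |xᵢ − median(x)|`. -/
noncomputable def sampleMAD {n : ℕ} (x : Fin n → ℝ) : ℝ :=
  sampleMedian (fun i => |x i - sampleMedian x|)

/-- The quantile function `Φ⁻¹` of the standard normal distribution:
`Φ⁻¹(p) = inf {x | p ≤ Φ(x)}` where `Φ` is the CDF of `N(0,1)`. -/
noncomputable def stdGaussianQuantile (p : ℝ) : ℝ :=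
  sInf {x : ℝ | p ≤ ProbabilityTheory.cdf (gaussianReal 0 1) x}


theorem countP_ofFn' {n : ℕ} (x : Fin n → ℝ) (p : ℝ → Bool) :
    (List.ofFn x).countP p = (Finset.univ.filter (fun i => p (x i))).card := by
  rw [List.ofFn_eq_map, List.countP_map, Finset.card_def, Finset.filter_val,
    ← Multiset.countP_eq_card_filter, Fin.univ_def]
  simp [Multiset.coe_countP, Function.comp_def]

theorem sorted_le_getElem {l : List ℝ} (hs : l.Pairwise (· ≤ ·)) {i j : ℕ}
    (hi : i < l.length) (hj : j < l.length) (hij : i ≤ j) : l[i] ≤ l[j] := by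
  rcases eq_or_lt_of_le hij with h | h
  · subst h; exact le_refl _
  · exact List.pairwise_iff_getElem.1 hs i j hi hj h

theorem getD_le_of_lt_countP {l : List ℝ} (hs : l.Pairwise (· ≤ ·)) {t : ℝ} {j : ℕ}
    (hj : j < l.countP (fun a => a ≤ t)) : l.getD j 0 ≤ t := by
  have hjl : j < l.length := lt_of_lt_of_le hj (l.countP_le_length)
  rw [List.getD_eq_getElem _ _ hjl]
  by_contra ht
  push_neg at ht
  have h0 : (l.drop j).countP (fun a => a ≤ t) = 0 := by
    rw [List.countP_eq_zero]
    intro a ha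
    obtain ⟨m, hm, ha⟩ := List.mem_iff_getElem.1 ha
    have hjm : j + m < l.length := by
      rw [List.length_drop] at hm; omega
    have hgd : (l.drop j)[m] = l[j + m] := List.getElem_drop
    have hle : l[j] ≤ a := by
      rw [← ha, hgd]; exact sorted_le_getElem hs hjl hjm (by omega)
    simp only [decide_eq_true_eq]
    exact not_le.2 (lt_of_lt_of_le ht hle)
  have hcount : l.countP (fun a => a ≤ t)
      = (l.take j).countP (fun a => a ≤ t) + (l.drop j).countP (fun a => a ≤ t) := by
    conv_lhs => rw [← l.take_append_drop j]
    rw [List.countP_append]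
  rw [h0, Nat.add_zero] at hcount
  have : l.countP (fun a => a ≤ t) ≤ j :=
    hcount ▸ le_trans ((l.take j).countP_le_length) (by simp)
  omega

theorem le_getD_of_length_le {l : List ℝ} (hs : l.Pairwise (· ≤ ·)) {t : ℝ} {j : ℕ}
    (hjl : j < l.length) (h : l.length ≤ j + l.countP (fun a => t ≤ a)) :
    t ≤ l.getD j 0 := by
  rw [List.getD_eq_getElem _ _ hjl]
  by_contra ht
  push_neg at ht
  have h0 : (l.take (j+1)).countP (fun a => t ≤ a) = 0 := by
    rw [List.countP_eq_zero]
    intro a ha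
    obtain ⟨m, hm, ha⟩ := List.mem_iff_getElem.1 ha
    rw [List.length_take] at hm
    have hm' : m < j + 1 := lt_of_lt_of_le hm (min_le_left _ _)
    have hml : m < l.length := by omega
    have hgd : (l.take (j+1))[m] = l[m] := List.getElem_take
    have hle : a ≤ l[j] := by
      rw [← ha, hgd]; exact sorted_le_getElem hs hml hjl (by omega)
    simp only [decide_eq_true_eq]
    exact not_le.2 (lt_of_le_of_lt hle ht)
  have hcount : l.countP (fun a => t ≤ a)
      = (l.take (j+1)).countP (fun a => t ≤ a) + (l.drop (j+1)).countP (fun a => t ≤ a) := by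
    conv_lhs => rw [← l.take_append_drop (j+1)]
    rw [List.countP_append]
  rw [h0, Nat.zero_add] at hcount
  have h2 : l.countP (fun a => t ≤ a) ≤ l.length - (j+1) :=
    hcount ▸ le_trans ((l.drop (j+1)).countP_le_length) (by simp)
  omega

theorem length_mergeSort_ofFn {n : ℕ} (x : Fin n → ℝ) :
    ((List.ofFn x).mergeSort (· ≤ ·)).length = n := by
  rw [(List.mergeSort_perm (List.ofFn x) _).length_eq, List.length_ofFn]

theorem countP_mergeSort_ofFn {n : ℕ} (x : Fin n → ℝ) (p : ℝ → Bool) :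
    ((List.ofFn x).mergeSort (· ≤ ·)).countP p = (Finset.univ.filter (fun i => p (x i))).card := by
  rw [(List.mergeSort_perm (List.ofFn x) _).countP_eq, countP_ofFn']

theorem sampleMedian_le {n : ℕ} {x : Fin n → ℝ} {t : ℝ}
    (h : n < 2 * (Finset.univ.filter (fun i => decide (x i ≤ t))).card) :
    sampleMedian x ≤ t := by
  classical
  set l := (List.ofFn x).mergeSort (· ≤ ·) with hl
  have hs : l.Pairwise (· ≤ ·) := List.pairwise_mergeSort' (· ≤ ·) _
  have hcnt : l.countP (fun a => decide (a ≤ t))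
      = (Finset.univ.filter (fun i => decide (x i ≤ t))).card := countP_mergeSort_ofFn x _
  have hlen : l.length = n := length_mergeSort_ofFn x
  rw [sampleMedian]
  split_ifs with hpar
  · exact getD_le_of_lt_countP hs (by omega)
  · have h1 : l.getD (n / 2 - 1) 0 ≤ t := getD_le_of_lt_countP hs (by omega)
    have h2 : l.getD (n / 2) 0 ≤ t := getD_le_of_lt_countP hs (by omega)
    linarith

theorem le_sampleMedian {n : ℕ} {x : Fin n → ℝ} {t : ℝ}
    (h : n < 2 * (Finset.univ.filter (fun i => decide (t ≤ x i))).card) :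
    t ≤ sampleMedian x := by
  classical
  set l := (List.ofFn x).mergeSort (· ≤ ·) with hl
  have hs : l.Pairwise (· ≤ ·) := List.pairwise_mergeSort' (· ≤ ·) _
  have hcnt : l.countP (fun a => decide (t ≤ a))
      = (Finset.univ.filter (fun i => decide (t ≤ x i))).card := countP_mergeSort_ofFn x _
  have hlen : l.length = n := length_mergeSort_ofFn x
  have hcl : l.countP (fun a => decide (t ≤ a)) ≤ n := hlen ▸ l.countP_le_length
  rw [sampleMedian]
  split_ifs with hpar
  · exact le_getD_of_length_le hs (by omega) (by omega)
  · have h1 : t ≤ l.getD (n / 2 - 1) 0 := le_getD_of_length_le hs (by omega) (by omega)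
    have h2 : t ≤ l.getD (n / 2) 0 := le_getD_of_length_le hs (by omega) (by omega)
    linarith

theorem lt_countP_iff_getD_le {l : List ℝ} (hs : l.Pairwise (· ≤ ·)) {t : ℝ} {j : ℕ}
    (hjl : j < l.length) :
    j < l.countP (fun a => decide (a ≤ t)) ↔ l.getD j 0 ≤ t := by
  constructor
  · exact getD_le_of_lt_countP hs
  · intro h
    rw [List.getD_eq_getElem _ _ hjl] at h
    have hall : (l.take (j+1)).countP (fun a => decide (a ≤ t)) = (l.take (j+1)).length := by
      rw [List.countP_eq_length]
      intro a ha
      obtain ⟨m, hm, ha⟩ := List.mem_iff_getElem.1 ha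
      rw [List.length_take] at hm
      have hm' : m < j + 1 := lt_of_lt_of_le hm (min_le_left _ _)
      have hml : m < l.length := by omega
      have hgd : (l.take (j+1))[m] = l[m] := List.getElem_take
      simp only [decide_eq_true_eq]
      rw [← ha, hgd]
      exact le_trans (sorted_le_getElem hs hml hjl (by omega)) h
    have hlt : (l.take (j+1)).length = j + 1 := by
      rw [List.length_take]; omega
    have hcount : l.countP (fun a => decide (a ≤ t))
        = (l.take (j+1)).countP (fun a => decide (a ≤ t)) + (l.drop (j+1)).countP (fun a => decide (a ≤ t)) := by
      conv_lhs => rw [← l.take_append_drop (j+1)]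
      rw [List.countP_append]
    omega

theorem measurable_count {n : ℕ} (t : ℝ) :
    Measurable (fun x : Fin n → ℝ => (Finset.univ.filter (fun i => decide (x i ≤ t))).card) := by
  classical
  have : (fun x : Fin n → ℝ => (Finset.univ.filter (fun i => decide (x i ≤ t))).card)
      = fun x => ∑ i : Fin n, if x i ≤ t then 1 else 0 := by
    funext x
    rw [Finset.card_filter]
    simp
  rw [this]
  apply Finset.measurable_sum
  intro i _
  exact Measurable.ite (measurableSet_le (measurable_pi_apply i) measurable_const)
    measurable_const measurable_const

theorem measurable_getD_mergeSort {n : ℕ} (j : ℕ) :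
    Measurable (fun x : Fin n → ℝ => ((List.ofFn x).mergeSort (· ≤ ·)).getD j 0) := by
  by_cases hj : j < n
  · apply measurable_of_Iic
    intro t
    have : (fun x : Fin n → ℝ => ((List.ofFn x).mergeSort (· ≤ ·)).getD j 0) ⁻¹' Set.Iic t
        = {x : Fin n → ℝ | j + 1 ≤ (Finset.univ.filter (fun i => decide (x i ≤ t))).card} := by
      ext x
      have hs : ((List.ofFn x).mergeSort (· ≤ ·)).Pairwise (· ≤ ·) := List.pairwise_mergeSort' (· ≤ ·) _
      have hiff := lt_countP_iff_getD_le (t := t) hs (j := j) (by rw [length_mergeSort_ofFn]; omega)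
      rw [countP_mergeSort_ofFn] at hiff
      simp only [Set.mem_preimage, Set.mem_Iic, Set.mem_setOf_eq, ← hiff]
      omega
    rw [this]
    exact measurableSet_le measurable_const (measurable_count t)
  · have : (fun x : Fin n → ℝ => ((List.ofFn x).mergeSort (· ≤ ·)).getD j 0)
        = fun _ => 0 := by
      funext x
      apply List.getD_eq_default
      rw [length_mergeSort_ofFn]; omega
    rw [this]
    exact measurable_const

theorem measurable_sampleMedian {n : ℕ} : Measurable (fun x : Fin n → ℝ => sampleMedian x) := by
  unfold sampleMedian
  split_ifs with h
  · exact measurable_getD_mergeSort _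
  · exact ((measurable_getD_mergeSort _).add (measurable_getD_mergeSort _)).div_const 2

theorem measurable_sampleMAD {n : ℕ} : Measurable (fun x : Fin n → ℝ => sampleMAD x) := by
  unfold sampleMAD
  exact measurable_sampleMedian.comp
    (measurable_pi_lambda _ fun i => ((measurable_pi_apply i).sub measurable_sampleMedian).abs)

end DetLemmas

section GaussLemmas

open Set

noncomputable abbrev stdG : Measure ℝ := gaussianReal 0 1
noncomputable abbrev Phi : ℝ → ℝ := fun x => cdf stdG x

lemma stdG_singleton (c : ℝ) : stdG {c} = 0 :=
  gaussianReal_absolutelyContinuous 0 one_ne_zero (measure_singleton c)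

lemma ofReal_Phi (x : ℝ) : ENNReal.ofReal (Phi x) = stdG (Iic x) := ofReal_cdf (μ := stdG) x

lemma Phi_eq (x : ℝ) : Phi x = (stdG (Iic x)).toReal := cdf_eq_real (μ := stdG) x

lemma stdG_Ioc_pos {a b : ℝ} (hab : a < b) : 0 < stdG (Ioc a b) := by
  rcases eq_or_lt_of_le (zero_le : 0 ≤ stdG (Ioc a b)) with h | h
  · exfalso
    have := gaussianReal_absolutelyContinuous' 0 one_ne_zero h.symm
    rw [Real.volume_Ioc] at this
    simp only [ENNReal.ofReal_eq_zero, sub_nonpos] at this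
    linarith
  · exact h

lemma Phi_strictMono : StrictMono Phi := by
  intro a b hab
  have hsplit : stdG (Iic b) = stdG (Iic a) + stdG (Ioc a b) := by
    rw [← measure_union (Set.Iic_disjoint_Ioc le_rfl) measurableSet_Ioc,
      Set.Iic_union_Ioc_eq_Iic hab.le]
  have hlt : stdG (Iic a) < stdG (Iic b) := by
    rw [hsplit]
    exact ENNReal.lt_add_right (measure_ne_top _ _) (stdG_Ioc_pos hab).ne'
  have := ENNReal.toReal_strict_mono (measure_ne_top _ _) hlt
  rwa [← Phi_eq, ← Phi_eq] at this

lemma gaussianPDF_le_one (x : ℝ) : gaussianPDF 0 1 x ≤ 1 := by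
  show ENNReal.ofReal (gaussianPDFReal 0 1 x) ≤ 1
  rw [show (1 : ℝ≥0∞) = ENNReal.ofReal 1 from by simp]
  apply ENNReal.ofReal_le_ofReal
  rw [gaussianPDFReal]
  have h1 : Real.exp (-(x - 0) ^ 2 / (2 * (1:ℝ≥0))) ≤ 1 := by
    rw [Real.exp_le_one_iff]
    have : (0:ℝ) ≤ (x - 0)^2 := sq_nonneg _
    have h2 : (0:ℝ) < 2 * (1:ℝ≥0) := by norm_num
    apply div_nonpos_of_nonpos_of_nonneg <;> [linarith; linarith]
  have h2 : (1:ℝ) ≤ Real.sqrt (2 * Real.pi * (1:ℝ≥0)) := by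
    rw [show ((1:ℝ≥0):ℝ) = 1 by simp, mul_one]
    rw [show (1:ℝ) = Real.sqrt 1 by simp]
    apply Real.sqrt_le_sqrt
    nlinarith [Real.pi_gt_three]
  have h3 : (0:ℝ) < Real.sqrt (2 * Real.pi * (1:ℝ≥0)) := lt_of_lt_of_le one_pos h2
  calc (Real.sqrt (2 * Real.pi * (1:ℝ≥0)))⁻¹ * Real.exp (-(x - 0) ^ 2 / (2 * (1:ℝ≥0)))
      ≤ (Real.sqrt (2 * Real.pi * (1:ℝ≥0)))⁻¹ * 1 := by
        apply mul_le_mul_of_nonneg_left h1 (by positivity)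
    _ ≤ 1 := by
        rw [mul_one]
        exact inv_le_one_of_one_le₀ h2

lemma Phi_lipschitz {a b : ℝ} (hab : a ≤ b) : Phi b - Phi a ≤ b - a := by
  have hsplit : stdG (Iic b) = stdG (Iic a) + stdG (Ioc a b) := by
    rw [← measure_union (Set.Iic_disjoint_Ioc le_rfl) measurableSet_Ioc,
      Set.Iic_union_Ioc_eq_Iic hab]
  have hIoc : stdG (Ioc a b) ≤ ENNReal.ofReal (b - a) := by
    rw [gaussianReal_apply 0 one_ne_zero]
    calc ∫⁻ x in Ioc a b, gaussianPDF 0 1 x ≤ ∫⁻ _ in Ioc a b, 1 :=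
          setLIntegral_mono measurable_const fun x _ => gaussianPDF_le_one x
      _ = volume (Ioc a b) := by rw [setLIntegral_one]
      _ = ENNReal.ofReal (b - a) := Real.volume_Ioc
  have h1 : Phi b = Phi a + (stdG (Ioc a b)).toReal := by
    rw [Phi_eq, Phi_eq, hsplit, ENNReal.toReal_add (measure_ne_top _ _) (measure_ne_top _ _)]
  have h2 : (stdG (Ioc a b)).toReal ≤ b - a := by
    rw [← ENNReal.ofReal_toReal (measure_ne_top stdG (Ioc a b))] at hIoc
    have := ENNReal.ofReal_le_ofReal_iff (by linarith) |>.mp hIoc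
    exact this
  linarith

lemma Phi_continuous : Continuous Phi := by
  apply LipschitzWith.continuous (K := 1)
  apply LipschitzWith.of_dist_le_mul
  intro a b
  rw [Real.dist_eq, Real.dist_eq, NNReal.coe_one, one_mul]
  rcases le_total a b with h | h
  · have hm := Phi_strictMono.monotone h
    rw [abs_sub_comm (Phi a), abs_sub_comm a, abs_of_nonneg (by linarith : (0:ℝ) ≤ Phi b - Phi a),
      abs_of_nonneg (by linarith : (0:ℝ) ≤ b - a)]
    exact Phi_lipschitz h
  · have hm := Phi_strictMono.monotone h
    rw [abs_of_nonneg (by linarith : (0:ℝ) ≤ Phi a - Phi b),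
      abs_of_nonneg (by linarith : (0:ℝ) ≤ a - b)]
    exact Phi_lipschitz h

lemma Phi_neg (c : ℝ) : Phi (-c) = 1 - Phi c := by
  have hmap : stdG.map (fun x : ℝ => -1 * x) = stdG := by
    have h := gaussianReal_map_const_mul (μ := 0) (v := 1) (-1)
    have hv : (NNReal.mk ((-1:ℝ)^2) (sq_nonneg _)) * 1 = 1 := by
      ext; norm_num
    rw [show ((-1 : ℝ) * ·) = (fun x : ℝ => -1 * x) from rfl] at h
    rw [h, hv]
    norm_num
  have hpre : (fun x : ℝ => -1 * x) ⁻¹' (Iic (-c)) = Ici c := by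
    ext x; simp only [mem_preimage, mem_Iic, mem_Ici]; constructor <;> intro h <;> linarith
  have h1 : stdG (Iic (-c)) = stdG (Ici c) := by
    conv_lhs => rw [← hmap]
    rw [Measure.map_apply (by fun_prop) measurableSet_Iic, hpre]
  have h2 : stdG (Ici c) = stdG (Ioi c) := by
    rw [← Set.Ioi_union_left, measure_union (by simp) (measurableSet_singleton c),
      stdG_singleton, add_zero]
  have h3 : stdG (Iic c) + stdG (Ioi c) = 1 := by
    rw [← Set.compl_Iic, measure_add_measure_compl measurableSet_Iic, measure_univ]
  have h4 : (stdG (Iic c)).toReal + (stdG (Ioi c)).toReal = 1 := by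
    rw [← ENNReal.toReal_add (measure_ne_top _ _) (measure_ne_top _ _), h3, ENNReal.toReal_one]
  rw [Phi_eq, Phi_eq, h1, h2]
  linarith

lemma Phi_zero : Phi 0 = 1 / 2 := by
  have := Phi_neg 0
  rw [neg_zero] at this
  linarith

lemma exists_Phi_eq : ∃ x : ℝ, Phi x = 3 / 4 := by
  have htop : Filter.Tendsto Phi Filter.atTop (nhds 1) := tendsto_cdf_atTop stdG
  have : ∀ᶠ x in Filter.atTop, (7:ℝ)/8 < Phi x := by
    have := htop.eventually (eventually_gt_nhds (by norm_num : (7:ℝ)/8 < 1))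
    exact this
  obtain ⟨b, hb⟩ := this.exists
  have hb0 : (0:ℝ) ≤ b := by
    by_contra h
    push_neg at h
    have := Phi_strictMono h
    rw [Phi_zero] at this
    linarith
  have := intermediate_value_Icc hb0 Phi_continuous.continuousOn
  have hmem : (3:ℝ)/4 ∈ Icc (Phi 0) (Phi b) := by
    rw [Phi_zero]
    constructor <;> [norm_num; linarith]
  obtain ⟨x, _, hx⟩ := this hmem
  exact ⟨x, hx⟩

lemma Phi_quantile : Phi (stdGaussianQuantile (3/4)) = 3 / 4 := by
  obtain ⟨x₀, hx₀⟩ := exists_Phi_eq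
  have hset : {x : ℝ | 3/4 ≤ ProbabilityTheory.cdf (gaussianReal 0 1) x} = Ici x₀ := by
    ext x
    simp only [mem_setOf_eq, mem_Ici]
    rw [← hx₀]
    exact ⟨fun h => (Phi_strictMono.le_iff_le).mp h, fun h => Phi_strictMono.monotone h⟩
  rw [stdGaussianQuantile, hset, csInf_Ici, hx₀]

lemma quantile_pos : 0 < stdGaussianQuantile (3/4) := by
  have h1 : Phi 0 < Phi (stdGaussianQuantile (3/4)) := by
    rw [Phi_zero, Phi_quantile]; norm_num
  exact Phi_strictMono.lt_iff_lt.mp h1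

-- measures of the four relevant sets
lemma half_lt_Iic {ε : ℝ} (hε : 0 < ε) : 1/2 < (stdG (Iic ε)).toReal := by
  rw [← Phi_eq, ← Phi_zero]
  exact Phi_strictMono hε

lemma half_lt_Ici {ε : ℝ} (hε : 0 < ε) : 1/2 < (stdG (Ici (-ε))).toReal := by
  have h2 : stdG (Ici (-ε)) = stdG (Ioi (-ε)) := by
    rw [← Set.Ioi_union_left, measure_union (by simp) (measurableSet_singleton _),
      stdG_singleton, add_zero]
  have h3 : stdG (Iic (-ε)) + stdG (Ioi (-ε)) = 1 := by
    rw [← Set.compl_Iic, measure_add_measure_compl measurableSet_Iic, measure_univ]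
  have h4 : (stdG (Iic (-ε))).toReal + (stdG (Ioi (-ε))).toReal = 1 := by
    rw [← ENNReal.toReal_add (measure_ne_top _ _) (measure_ne_top _ _), h3, ENNReal.toReal_one]
  have h5 : (stdG (Iic (-ε))).toReal < 1/2 := by
    rw [← Phi_eq]
    have := Phi_strictMono (show -ε < 0 by linarith)
    rw [Phi_zero] at this
    linarith
  rw [h2]
  linarith

lemma stdG_abs_le {c : ℝ} (hc : 0 ≤ c) :
    (stdG {x : ℝ | |x| ≤ c}).toReal = 2 * Phi c - 1 := by
  have hset : {x : ℝ | |x| ≤ c} = Icc (-c) c := by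
    ext x; simp [abs_le]
  have hsplit : stdG (Iic c) = stdG (Iic (-c)) + stdG (Ioc (-c) c) := by
    rw [← measure_union (Set.Iic_disjoint_Ioc le_rfl) measurableSet_Ioc,
      Set.Iic_union_Ioc_eq_Iic (by linarith)]
  have hIccIoc : stdG (Icc (-c) c) = stdG (Ioc (-c) c) := by
    rw [← Set.Ioc_union_left (by linarith : -c ≤ c), measure_union (by simp)
      (measurableSet_singleton _), stdG_singleton, add_zero]
  have h4 : (stdG (Iic c)).toReal = (stdG (Iic (-c))).toReal + (stdG (Ioc (-c) c)).toReal := by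
    rw [hsplit, ENNReal.toReal_add (measure_ne_top _ _) (measure_ne_top _ _)]
  rw [hset, hIccIoc]
  have hn := Phi_neg c
  rw [Phi_eq, Phi_eq] at *
  linarith

lemma half_lt_abs_le {c : ℝ} (h : 3/4 < Phi c) :
    1/2 < (stdG {x : ℝ | |x| ≤ c}).toReal := by
  have hc : 0 ≤ c := by
    by_contra hneg
    push_neg at hneg
    have := Phi_strictMono hneg
    rw [Phi_zero] at this
    linarith
  rw [stdG_abs_le hc]
  linarith

lemma half_lt_abs_ge {c : ℝ} (h : Phi c < 3/4) :
    1/2 < (stdG {x : ℝ | c ≤ |x|}).toReal := by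
  rcases le_or_gt c 0 with hc | hc
  · have : {x : ℝ | c ≤ |x|} = univ := by
      ext x; simp only [mem_setOf_eq, mem_univ, iff_true]
      exact le_trans hc (abs_nonneg x)
    rw [this]
    simp only [measure_univ, ENNReal.toReal_one]
    norm_num
  · have hset : {x : ℝ | c ≤ |x|} = ({x : ℝ | |x| ≤ c})ᶜ ∪ {c, -c} := by
      ext x
      simp only [mem_setOf_eq, mem_union, mem_compl_iff, mem_insert_iff, mem_singleton_iff]
      constructor
      · intro hx
        rcases eq_or_lt_of_le hx with h' | h'
        · rcases abs_eq (le_of_lt hc) |>.mp h'.symm with h'' | h''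
          · right; left; exact h''
          · right; right; exact h''
        · left; exact not_le.2 h'
      · rintro (hx | hx | hx)
        · exact le_of_lt (not_le.1 hx)
        · rw [hx, abs_of_pos hc]
        · rw [hx, abs_neg, abs_of_pos hc]
    have hcompl : (stdG ({x : ℝ | |x| ≤ c})ᶜ).toReal = 1 - (2 * Phi c - 1) := by
      have hmeas : MeasurableSet {x : ℝ | |x| ≤ c} := by
        have : {x : ℝ | |x| ≤ c} = Icc (-c) c := by ext x; simp [abs_le]
        rw [this]; exact measurableSet_Icc
      have := measure_add_measure_compl (μ := stdG) hmeas
      rw [measure_univ] at this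
      have h4 : (stdG {x : ℝ | |x| ≤ c}).toReal + (stdG ({x : ℝ | |x| ≤ c})ᶜ).toReal = 1 := by
        rw [← ENNReal.toReal_add (measure_ne_top _ _) (measure_ne_top _ _), this,
          ENNReal.toReal_one]
      rw [stdG_abs_le (le_of_lt hc)] at h4
      linarith
    have hsub : stdG ({x : ℝ | |x| ≤ c})ᶜ ≤ stdG {x : ℝ | c ≤ |x|} := by
      apply measure_mono
      rw [hset]
      exact subset_union_left
    have := ENNReal.toReal_mono (measure_ne_top _ _) hsub
    rw [hcompl] at this
    linarith

end GaussLemmas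

section Prob

variable {Ω : Type*} [MeasurableSpace Ω] (P : Measure Ω) [IsProbabilityMeasure P]
  (Z : ℕ → Ω → ℝ)

omit [IsProbabilityMeasure P] in
theorem count_ae [IsProbabilityMeasure P] (hZmeas : ∀ i, Measurable (Z i))
    (hZindep : iIndepFun Z P)
    (hZlaw : ∀ i, P.map (Z i) = gaussianReal 0 1)
    (p : ℝ → Bool) (hp : MeasurableSet {a : ℝ | p a})
    (h : 1/2 < ((gaussianReal 0 1) {a : ℝ | p a}).toReal) :
    ∀ᵐ ω ∂P, ∀ᶠ n : ℕ in atTop,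
      n < 2 * (Finset.univ.filter (fun i : Fin n => p (Z i ω))).card := by
  classical
  set g : ℝ → ℝ := fun a => if p a then 1 else 0 with hg
  have hgmeas : Measurable g := Measurable.ite hp measurable_const measurable_const
  set X : ℕ → Ω → ℝ := fun i ω => g (Z i ω) with hX
  have hXmeas : ∀ i, Measurable (X i) := fun i => hgmeas.comp (hZmeas i)
  have hint : Integrable (X 0) P := by
    apply (integrable_const (1:ℝ)).mono' (hXmeas 0).aestronglyMeasurable
    filter_upwards with ω
    simp only [hX, hg, Real.norm_eq_abs]
    split_ifs <;> norm_num
  have hindep : Pairwise (Function.onFun (IndepFun · · P) X) := by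
    intro i j hij
    exact (hZindep.indepFun hij).comp hgmeas hgmeas
  have hident : ∀ i, IdentDistrib (X i) (X 0) P P := by
    intro i
    have hZid : IdentDistrib (Z i) (Z 0) P P :=
      ⟨(hZmeas i).aemeasurable, (hZmeas 0).aemeasurable, by rw [hZlaw i, hZlaw 0]⟩
    exact hZid.comp hgmeas
  have hmean : P[X 0] = ((gaussianReal 0 1) {a : ℝ | p a}).toReal := by
    have h1 : P[X 0] = ∫ a, g a ∂(P.map (Z 0)) :=
      (integral_map (hZmeas 0).aemeasurable hgmeas.aestronglyMeasurable).symm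
    rw [h1, hZlaw 0]
    have h2 : g = Set.indicator {a : ℝ | p a} (fun _ => (1:ℝ)) := by
      funext a
      simp [hg, Set.indicator_apply]
    rw [h2, integral_indicator_const (1:ℝ) hp, smul_eq_mul, mul_one, measureReal_def]
  have hslln := strong_law_ae_real X hint hindep hident
  filter_upwards [hslln] with ω hω
  rw [hmean] at hω
  have hev : ∀ᶠ n : ℕ in atTop,
      1/2 < (∑ i ∈ Finset.range n, X i ω) / n :=
    hω.eventually (eventually_gt_nhds h)
  filter_upwards [hev, eventually_ge_atTop 1] with n hn hn1
  have hsum : (∑ i ∈ Finset.range n, X i ω)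
      = ((Finset.univ.filter (fun i : Fin n => p (Z i ω))).card : ℝ) := by
    rw [Finset.card_filter]
    push_cast
    rw [← Fin.sum_univ_eq_sum_range (fun i => X i ω) n]
  rw [hsum] at hn
  have hnpos : (0:ℝ) < n := by exact_mod_cast hn1
  have : (n : ℝ) < 2 * ((Finset.univ.filter (fun i : Fin n => p (Z i ω))).card : ℝ) := by
    rw [lt_div_iff₀ hnpos] at hn
    linarith
  exact_mod_cast this

end Prob

/-- For i.i.d. standard normal `Z₁, Z₂, …`, the rescaled median absolute
deviation `MAD₁≤i≤n Zᵢ / Φ⁻¹(3/4)` converges in probability to `1`. -/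
theorem rescaled_mad_weakly_consistent
    {Ω : Type*} [MeasurableSpace Ω] (P : Measure Ω) [IsProbabilityMeasure P]
    (Z : ℕ → Ω → ℝ) (hZmeas : ∀ i, Measurable (Z i))
    (hZindep : iIndepFun Z P)
    (hZlaw : ∀ i, P.map (Z i) = gaussianReal 0 1) :
    ∀ ε : ℝ, 0 < ε →
      Tendsto
        (fun n : ℕ =>
          P {ω | ε < |sampleMAD (fun i : Fin n => Z i ω) /
              stdGaussianQuantile (3 / 4) - 1|})
        atTop (nhds 0) := by
  intro ε hε
  have hq34 : Phi (stdGaussianQuantile (3/4)) = 3/4 := Phi_quantile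
  have hqpos : 0 < stdGaussianQuantile (3/4) := quantile_pos
  set q : ℝ := stdGaussianQuantile (3/4) with hqdef
  -- Step 1: for every `δ > 0`, a.s. eventually `|MAD - q| ≤ δ`.
  have key : ∀ δ : ℝ, 0 < δ → ∀ᵐ ω ∂P, ∀ᶠ n : ℕ in atTop,
      |sampleMAD (fun i : Fin n => Z i ω) - q| ≤ δ := by
    intro δ hδ
    have hc1 := count_ae P Z hZmeas hZindep hZlaw (fun a => decide (a ≤ δ/4))
      (by simp only [decide_eq_true_eq]; exact measurableSet_Iic)
      (by simp only [decide_eq_true_eq]; exact half_lt_Iic (by linarith : (0:ℝ) < δ/4))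
    have hc2 := count_ae P Z hZmeas hZindep hZlaw (fun a => decide (-(δ/4) ≤ a))
      (by simp only [decide_eq_true_eq]; exact measurableSet_Ici)
      (by
        have := half_lt_Ici (by linarith : (0:ℝ) < δ/4)
        simp only [decide_eq_true_eq]; exact this)
    have hΦ1 : 3/4 < Phi (q + δ/2) := by
      rw [← hq34]; exact Phi_strictMono (by linarith)
    have hΦ2 : Phi (q - δ/2) < 3/4 := by
      rw [← hq34]; exact Phi_strictMono (by linarith)
    have hc3 := count_ae P Z hZmeas hZindep hZlaw (fun a => decide (|a| ≤ q + δ/2))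
      (by
        simp only [decide_eq_true_eq]
        exact measurableSet_le (by fun_prop) measurable_const)
      (by simpa only [decide_eq_true_eq] using half_lt_abs_le hΦ1)
    have hc4 := count_ae P Z hZmeas hZindep hZlaw (fun a => decide (q - δ/2 ≤ |a|))
      (by
        simp only [decide_eq_true_eq]
        exact measurableSet_le measurable_const (by fun_prop))
      (by simpa only [decide_eq_true_eq] using half_lt_abs_ge hΦ2)
    filter_upwards [hc1, hc2, hc3, hc4] with ω h1 h2 h3 h4
    filter_upwards [h1, h2, h3, h4] with n hn1 hn2 hn3 hn4
    set M : ℝ := sampleMedian (fun i : Fin n => Z i ω) with hM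
    have hMle : M ≤ δ/4 := sampleMedian_le hn1
    have hMge : -(δ/4) ≤ M := le_sampleMedian hn2
    have hMabs : |M| ≤ δ/4 := abs_le.2 ⟨hMge, hMle⟩
    have hMADdef : sampleMAD (fun i : Fin n => Z i ω)
        = sampleMedian (fun i : Fin n => |Z i ω - M|) := rfl
    have hub : sampleMAD (fun i : Fin n => Z i ω) ≤ q + 3*δ/4 := by
      rw [hMADdef]
      apply sampleMedian_le
      refine lt_of_lt_of_le hn3 ?_
      have hsub : (Finset.univ.filter (fun i : Fin n => decide (|Z i ω| ≤ q + δ/2)))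
          ⊆ (Finset.univ.filter (fun i : Fin n => decide (|Z i ω - M| ≤ q + 3*δ/4))) := by
        intro i hi
        simp only [Finset.mem_filter, decide_eq_true_eq] at *
        refine ⟨hi.1, ?_⟩
        have htri : |Z i ω - M| ≤ |Z i ω| + |M| := by
          rw [sub_eq_add_neg]
          exact le_trans (abs_add_le _ _) (by rw [abs_neg])
        linarith [hi.2]
      exact Nat.mul_le_mul_left 2 (Finset.card_le_card hsub)
    have hlb : q - 3*δ/4 ≤ sampleMAD (fun i : Fin n => Z i ω) := by
      rw [hMADdef]
      apply le_sampleMedian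
      refine lt_of_lt_of_le hn4 ?_
      have hsub : (Finset.univ.filter (fun i : Fin n => decide (q - δ/2 ≤ |Z i ω|)))
          ⊆ (Finset.univ.filter (fun i : Fin n => decide (q - 3*δ/4 ≤ |Z i ω - M|))) := by
        intro i hi
        simp only [Finset.mem_filter, decide_eq_true_eq] at *
        refine ⟨hi.1, ?_⟩
        have htri : |Z i ω| - |M| ≤ |Z i ω - M| := abs_sub_abs_le_abs_sub _ _
        linarith [hi.2]
      exact Nat.mul_le_mul_left 2 (Finset.card_le_card hsub)
    rw [abs_le]
    constructor <;> linarith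
  -- Step 2: a.s. `MAD → q`.
  have hae : ∀ᵐ ω ∂P,
      Tendsto (fun n : ℕ => sampleMAD (fun i : Fin n => Z i ω)) atTop (nhds q) := by
    have hall : ∀ᵐ ω ∂P, ∀ k : ℕ, ∀ᶠ n : ℕ in atTop,
        |sampleMAD (fun i : Fin n => Z i ω) - q| ≤ 1/(k+1) :=
      ae_all_iff.2 fun k => key (1/(k+1)) (by positivity)
    filter_upwards [hall] with ω hω
    rw [Metric.tendsto_atTop]
    intro e he
    obtain ⟨k, hk⟩ := exists_nat_one_div_lt he
    obtain ⟨N, hN⟩ := eventually_atTop.1 (hω k)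
    exact ⟨N, fun n hn => by
      rw [Real.dist_eq]
      exact lt_of_le_of_lt (hN n hn) hk⟩
  -- Step 3: convergence in probability.
  have hf : ∀ n : ℕ, AEStronglyMeasurable
      (fun ω => sampleMAD (fun i : Fin n => Z i ω) / q) P := fun n =>
    ((measurable_sampleMAD.comp (measurable_pi_lambda _ fun i => hZmeas i)).div_const
      q).aestronglyMeasurable
  have h2 : ∀ᵐ ω ∂P, Tendsto (fun n : ℕ => sampleMAD (fun i : Fin n => Z i ω) / q)
      atTop (nhds ((fun _ : Ω => (1:ℝ)) ω)) := by
    filter_upwards [hae] with ω hω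
    have := hω.div_const q
    rwa [div_self hqpos.ne'] at this
  have htim : TendstoInMeasure P (fun n ω => sampleMAD (fun i : Fin n => Z i ω) / q)
      atTop (fun _ => (1:ℝ)) := tendstoInMeasure_of_tendsto_ae hf h2
  have hεt := htim (ENNReal.ofReal ε) (ENNReal.ofReal_pos.2 hε)
  refine tendsto_of_tendsto_of_tendsto_of_le_of_le tendsto_const_nhds hεt
    (fun n => zero_le) (fun n => measure_mono ?_)
  intro ω hω
  simp only [Set.mem_setOf_eq] at *
  rw [edist_dist, Real.dist_eq]
  exact ENNReal.ofReal_le_ofReal (le_of_lt hω)
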